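/- For a morphism f : X ⟶ Y of A, viewed as an object of Arrow(A), the following are equivalent: (a) f has the extension property along all kernel inclusions of counits: for every object g of Arrow(A) and every morphism φ : ker(ε_g) ⟶ f in Arrow(A), there exists ψ : FG(g) ⟶ f in Arrow(A) such that the kernel inclusion ker(ε_g) ⟶ FG(g) followed by ψ equals φ (i.e. f is E-injective); (b) f is a split epimorphism in A, i.e. there exists s : Y ⟶ X with s ≫ f = 𝟙_Y. -/

import Mathlib

open CategoryTheory Limits

universe w v u

variable (A : Type u) [Category.{v} A] [Abelian A]

/-- The functor `F : A × A ⥤ Arrow A` sending `(X, Y)` to the object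
`biprod.inl : X ⟶ X ⊞ Y` of the arrow category. -/
@[simps]
noncomputable def ArrF : A × A ⥤ Arrow A where
  obj p := Arrow.mk (biprod.inl : p.1 ⟶ p.1 ⊞ p.2)
  map {p q} φ := Arrow.homMk (u := φ.1) (v := biprod.map φ.1 φ.2) (by simp)

/-- The forgetful functor `G : Arrow A ⥤ A × A` sending an object `f : X ⟶ Y` of the
arrow category to the pair `(X, Y)`. -/
@[simps]
def ArrG : Arrow A ⥤ A × A where
  obj f := (f.left, f.right)
  map φ := (φ.left, φ.right)

variable {A}

/-- The counit morphism `ε_f : FG(f) ⟶ f`, whose domain component is `𝟙 X` and whose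
codomain component is `biprod.desc f 𝟙 : X ⊞ Y ⟶ Y`. -/
noncomputable def arrCounit (f : Arrow A) : (ArrF A).obj ((ArrG A).obj f) ⟶ f :=
  Arrow.homMk (u := 𝟙 f.left) (v := biprod.desc f.hom (𝟙 f.right))
    (by exact (Category.id_comp _).trans (biprod.inl_desc _ _).symm)

section Aux

open ZeroObject

variable [Abelian (Arrow A)]

/-- `Arrow.mk (𝟙 0)` is a zero object of `Arrow A`. -/
lemma isZero_arrowZero : IsZero (Arrow.mk (𝟙 (0 : A))) := by
  refine ⟨fun Y => ⟨⟨⟨Arrow.homMk (u := 0) (v := 0) (by simp)⟩, fun u => ?_⟩⟩,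
    fun Y => ⟨⟨⟨Arrow.homMk (u := 0) (v := 0) (by simp)⟩, fun u => ?_⟩⟩⟩
  · apply Arrow.hom_ext
    · exact (isZero_zero A).eq_of_src _ _
    · exact (isZero_zero A).eq_of_src _ _
  · apply Arrow.hom_ext
    · exact (isZero_zero A).eq_of_tgt _ _
    · exact (isZero_zero A).eq_of_tgt _ _

lemma zero_components {P Q : Arrow A} :
    (0 : P ⟶ Q).left = 0 ∧ (0 : P ⟶ Q).right = 0 := by
  let a : P ⟶ Arrow.mk (𝟙 (0 : A)) := Arrow.homMk (u := 0) (v := 0) (by simp)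
  let b : Arrow.mk (𝟙 (0 : A)) ⟶ Q := Arrow.homMk (u := 0) (v := 0) (by simp)
  have h : (0 : P ⟶ Q) = a ≫ b := by
    have h1 : (0 : P ⟶ Arrow.mk (𝟙 (0 : A))) = a := isZero_arrowZero.eq_of_tgt _ _
    rw [← h1, zero_comp]
  constructor <;> rw [h] <;> simp [a, b]

/-- The explicit kernel object of `arrCounit g`. -/
noncomputable def Zg (g : Arrow A) : Arrow A := Arrow.mk (0 : (0 : A) ⟶ g.left)

/-- The explicit kernel inclusion. -/
noncomputable def jmap (g : Arrow A) : Zg g ⟶ (ArrF A).obj ((ArrG A).obj g) :=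
  Arrow.homMk (u := 0) (v := biprod.lift (𝟙 g.left) (-g.hom))
    (by apply (isZero_zero A).eq_of_src)

lemma jmap_counit (g : Arrow A) : jmap g ≫ arrCounit g = 0 := by
  apply Arrow.hom_ext
  · rw [zero_components.1]
    exact (isZero_zero A).eq_of_src _ _
  · rw [zero_components.2, Arrow.comp_right]
    change biprod.lift (𝟙 g.left) (-g.hom) ≫ biprod.desc g.hom (𝟙 g.right) = 0
    simp

noncomputable def einv (g : Arrow A) : Zg g ⟶ (kernel (arrCounit g) : Arrow A) :=
  kernel.lift _ (jmap g) (jmap_counit g)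

lemma einv_ι (g : Arrow A) : einv g ≫ kernel.ι (arrCounit g) = jmap g :=
  kernel.lift_ι _ _ _

lemma arrCounit_left (g : Arrow A) : (arrCounit g).left = 𝟙 g.left := rfl

lemma arrCounit_right (g : Arrow A) :
    (arrCounit g).right = biprod.desc g.hom (𝟙 g.right) := rfl


lemma kι_left (g : Arrow A) : (kernel.ι (arrCounit g)).left = 0 := by
  have h := congrArg Arrow.Hom.left (kernel.condition (arrCounit g))
  rw [zero_components.1, Arrow.comp_left] at h
  exact (Category.comp_id _).symm.trans h

lemma kι_right (g : Arrow A) :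
    (kernel.ι (arrCounit g)).right ≫ biprod.desc g.hom (𝟙 g.right) = 0 := by
  have h := congrArg Arrow.Hom.right (kernel.condition (arrCounit g))
  rw [zero_components.2, Arrow.comp_right] at h
  exact h

lemma kι_snd (g : Arrow A) :
    (kernel.ι (arrCounit g)).right ≫ biprod.snd
      = -((kernel.ι (arrCounit g)).right ≫ biprod.fst ≫ g.hom) := by
  have h := kι_right g
  refine eq_neg_iff_add_eq_zero.mpr ?_
  erw [← h, ← Preadditive.comp_add]
  congr 1
  show (biprod.snd : g.left ⊞ g.right ⟶ g.right) + (biprod.fst : g.left ⊞ g.right ⟶ g.left) ≫ g.hom = biprod.desc g.hom (𝟙 g.right)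
  apply biprod.hom_ext' <;> simp

noncomputable def ehom (g : Arrow A) : (kernel (arrCounit g) : Arrow A) ⟶ Zg g :=
  Arrow.homMk (u := 0) (v := (kernel.ι (arrCounit g)).right ≫ biprod.fst) (by
    have hw := Arrow.w (kernel.ι (arrCounit g))
    simp only [Zg, Arrow.mk_hom, comp_zero]
    erw [zero_comp, ← Category.assoc, ← hw, kι_left, zero_comp, zero_comp])

lemma ehom_einv (g : Arrow A) : ehom g ≫ einv g = 𝟙 _ := by
  rw [← cancel_mono (kernel.ι (arrCounit g)), Category.assoc, einv_ι, Category.id_comp]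
  apply Arrow.hom_ext
  · rw [kι_left, Arrow.comp_left]
    simp [ehom, jmap]
  · rw [Arrow.comp_right]
    show ((kernel.ι (arrCounit g)).right ≫ biprod.fst) ≫ biprod.lift (𝟙 g.left) (-g.hom)
      = (kernel.ι (arrCounit g)).right
    apply biprod.hom_ext
    · erw [Category.assoc, biprod.lift_fst, Category.comp_id]
      rfl
    · erw [Category.assoc, biprod.lift_snd, Preadditive.comp_neg, neg_eq_iff_add_eq_zero,
        Category.assoc, ← Preadditive.comp_add]
      convert kι_right g using 2
      congr 1
      show (biprod.fst : g.left ⊞ g.right ⟶ g.left) ≫ g.hom + (biprod.snd : g.left ⊞ g.right ⟶ g.right) = biprod.desc g.hom (𝟙 g.right)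
      apply biprod.hom_ext' <;> simp

lemma einv_ehom (g : Arrow A) : einv g ≫ ehom g = 𝟙 _ := by
  apply Arrow.hom_ext
  · exact (isZero_zero A).eq_of_src _ _
  · have h := congrArg Arrow.Hom.right (einv_ι g)
    rw [Arrow.comp_right] at h
    rw [Arrow.comp_right, Arrow.id_right]
    show (einv g).right ≫ (kernel.ι (arrCounit g)).right ≫ biprod.fst = 𝟙 _
    erw [← Category.assoc, h]
    show biprod.lift (𝟙 g.left) (-g.hom) ≫ biprod.fst = 𝟙 g.left
    simp

instance einv_isIso (g : Arrow A) : IsIso (einv g) := ⟨ehom g, einv_ehom g, ehom_einv g⟩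

end Aux

/-- an object `f : X ⟶ Y` of `Arrow A` has the extension property along
all kernel inclusions of counits `ker(ε_g) ⟶ FG(g)` (i.e. `f` is `E`-injective) if and
only if `f` is a split epimorphism in `A`, i.e. it admits a section. -/
theorem statement9 [Abelian (Arrow A)] (f : Arrow A) :
    (∀ (g : Arrow A) (φ : (kernel (arrCounit g) : Arrow A) ⟶ f),
        ∃ ψ : (ArrF A).obj ((ArrG A).obj g) ⟶ f, kernel.ι (arrCounit g) ≫ ψ = φ) ↔
      ∃ s : f.right ⟶ f.left, s ≫ f.hom = 𝟙 f.right := by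
  open ZeroObject in
  constructor
  · intro h
    set g₀ : Arrow A := Arrow.mk (0 : f.right ⟶ (0 : A)) with hg₀
    let φ₀ : Zg g₀ ⟶ f := Arrow.homMk (u := 0) (v := 𝟙 f.right)
      (by exact (isZero_zero A).eq_of_src _ _)
    obtain ⟨ψ, hψ⟩ := h g₀ (ehom g₀ ≫ φ₀)
    have h2 : jmap g₀ ≫ ψ = φ₀ := by
      rw [← einv_ι g₀, Category.assoc, hψ, ← Category.assoc, einv_ehom, Category.id_comp]
    have h3 := congrArg Arrow.Hom.right h2
    rw [Arrow.comp_right] at h3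
    simp only [φ₀, Arrow.homMk_right] at h3
    have hinl : ((ArrF A).obj ((ArrG A).obj g₀)).hom = (jmap g₀).right := by
      simp only [jmap, Arrow.homMk_right]
      show (biprod.inl : g₀.left ⟶ g₀.left ⊞ g₀.right) = biprod.lift (𝟙 g₀.left) (-g₀.hom)
      apply biprod.hom_ext
      · simp
      · have hz : g₀.hom = 0 := rfl
        simp [hz]
    refine ⟨ψ.left, ?_⟩
    erw [Arrow.w ψ, hinl, h3]
    rfl
  · rintro ⟨s, hs⟩ g φ
    have hψw : (((einv g ≫ φ).right) ≫ s) ≫ f.hom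
        = ((ArrF A).obj ((ArrG A).obj g)).hom ≫ (biprod.fst ≫ (einv g ≫ φ).right) := by
      rw [Category.assoc, hs, Category.comp_id]
      show _ = biprod.inl ≫ biprod.fst ≫ (einv g ≫ φ).right
      rw [← Category.assoc, biprod.inl_fst]
      exact (Category.id_comp _).symm
    refine ⟨Arrow.homMk (u := (einv g ≫ φ).right ≫ s)
      (v := biprod.fst ≫ (einv g ≫ φ).right) hψw, ?_⟩
    rw [← cancel_epi (einv g), ← Category.assoc, einv_ι]
    apply Arrow.hom_ext
    · exact (isZero_zero A).eq_of_src _ _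
    · rw [Arrow.comp_right]
      simp only [jmap, Arrow.homMk_right]
      erw [← Category.assoc, biprod.lift_fst]
      exact Category.id_comp _
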